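/- Let R be a commutative Noetherian ring of prime characteristic p and let I, J be ideals of R. If I^{[q]} ⊆ J^{[q]} for some q = p^e and the Frobenius map on R is injective (i.e., R is reduced) and flat, then I ⊆ J. -/

import Mathlib

open Module in
/-- Equational criterion for a flat ring endomorphism, phrased with `F r * s` instead of `r • s`. -/
lemma flat_relation_aux {R : Type u} [CommRing R] (F : R →+* R) (hF : F.Flat)
    {ι : Type u} [Fintype ι] (f : ι → R) (s : ι → R)
    (hrel : ∑ i, F (f i) * s i = 0) :
    ∃ (κ : Type u) (_ : Fintype κ) (a : ι → κ → R) (y : κ → R),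
      (∀ i, s i = ∑ j, F (a i j) * y j) ∧ ∀ j, ∑ i, f i * a i j = 0 := by
  letI : Algebra R R := F.toAlgebra
  letI : Module R R := Algebra.toModule
  letI : SMul R R := Algebra.toSMul
  haveI : Module.Flat R R := hF
  have hsmul : ∀ (r t : R), r • t = F r * t := fun r t => by
    rfl
  have h0 : ∑ i, f i • s i = 0 := by
    simp only [hsmul]; exact hrel
  obtain ⟨k, a, y, h1, h2⟩ :=
    Module.Flat.isTrivialRelation_of_sum_smul_eq_zero (M := R) (f := f) (x := s) h0
  exact ⟨ULift (Fin k), inferInstance, fun i j => a i j.down, fun j => y j.down,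
    fun i => by rw [h1 i, ← Equiv.ulift.sum_comp]; simp only [hsmul]; rfl, fun j => h2 j.down⟩

/-- Frobenius descent: if `R` is Noetherian of prime characteristic `p` with injective and flat
Frobenius, and `I^{[q]} ⊆ J^{[q]}` for some `q = p^e`, then `I ⊆ J`. -/
theorem le_of_frobeniusPower_le {R : Type*} [CommRing R] [IsNoetherianRing R] (p : ℕ)
    [Fact p.Prime] [CharP R p]
    (hinj : Function.Injective (frobenius R p)) (hflat : (frobenius R p).Flat)
    (I J : Ideal R) (e : ℕ)
    (h : Ideal.span ((fun x => x ^ p ^ e) '' (I : Set R)) ≤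
      Ideal.span ((fun x => x ^ p ^ e) '' (J : Set R))) :
    I ≤ J := by
  intro x hx
  set q := p ^ e with hq
  have hq0 : 0 < q := pow_pos (Fact.out (p := p.Prime)).pos e
  -- the iterated Frobenius is flat
  have hFflat : (iterateFrobenius R p e).Flat := by
    clear h hx hq hq0
    induction e with
    | zero => rw [iterateFrobenius_zero]; exact RingHom.Flat.id R
    | succ n ih =>
      have heq : iterateFrobenius R p (n + 1) =
          (iterateFrobenius R p n).comp (iterateFrobenius R p 1) :=
        iterateFrobenius_add R p n 1
      rw [heq, iterateFrobenius_one]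
      exact @RingHom.Flat.comp _ _ _ _ _ _ (frobenius R p) (iterateFrobenius R p n) hflat ih
  set F := iterateFrobenius R p e with hF
  have hFdef : ∀ y : R, F y = y ^ q := fun y => iterateFrobenius_def p e y
  -- x^q lies in the span of q-th powers of J
  have hxq : x ^ q ∈ Ideal.span ((fun y => y ^ q) '' (J : Set R)) :=
    h (Ideal.subset_span ⟨x, hx, rfl⟩)
  obtain ⟨n, r, g, hsum⟩ := Submodule.mem_span_set'.mp hxq
  -- choose q-th roots in J
  have hg : ∀ i : Fin n, ∃ a ∈ (J : Set R), a ^ q = (g i : R) := fun i => (g i).2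
  choose a haJ haq using hg
  -- set up the relation  F x * 1 + ∑ F (a i) * (-(r i)) = 0
  set f' : Option (ULift (Fin n)) → R := fun i => i.elim x (fun t => a t.down) with hf'
  set s' : Option (ULift (Fin n)) → R := fun i => i.elim 1 (fun t => -(r t.down)) with hs'
  have hrel : ∑ i, F (f' i) * s' i = 0 := by
    rw [Fintype.sum_option]
    have hsum2 : ∑ i : ULift (Fin n), F (f' (some i)) * s' (some i)
        = ∑ i : Fin n, F (a i) * (-(r i)) :=
      Equiv.ulift.sum_comp (fun i : Fin n => F (a i) * (-(r i)))
    simp only [hf', hs', Option.elim] at hsum2 ⊢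
    rw [hsum2]
    have : ∑ i : Fin n, F (a i) * (-(r i)) = -(x ^ q) := by
      rw [← hsum]
      simp only [hFdef, haq, smul_eq_mul]
      rw [← Finset.sum_neg_distrib]
      exact Finset.sum_congr rfl fun i _ => by ring
    rw [this, hFdef]
    ring
  obtain ⟨κ, hκ, a', y, h1, h2⟩ := flat_relation_aux F hFflat f' s' hrel
  -- every a' none j lies in the colon ideal J : x
  have hcolon : ∀ j, a' none j ∈ J.colon (Ideal.span {x}) := by
    intro j
    rw [Ideal.mem_colon_span_singleton]
    have h2j := h2 j
    rw [Fintype.sum_option] at h2j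
    have : f' none * a' none j = -∑ i : ULift (Fin n), f' (some i) * a' (some i) j :=
      eq_neg_of_add_eq_zero_left h2j
    simp only [hf', Option.elim] at this
    rw [mul_comm, this]
    refine neg_mem (Ideal.sum_mem _ fun i _ => Ideal.mul_mem_right _ _ (haJ i.down))
  -- 1 lies in the colon ideal, since  1 = ∑ (a' none j)^q * y j
  have hone : (1 : R) ∈ J.colon (Ideal.span {x}) := by
    have h1n := h1 none
    simp only [hs', Option.elim] at h1n
    rw [h1n]
    refine Ideal.sum_mem _ fun j _ => Ideal.mul_mem_right _ _ ?_
    rw [hFdef]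
    exact Ideal.pow_mem_of_mem _ (hcolon j) q hq0
  have := Ideal.mem_colon_span_singleton.mp hone
  rwa [one_mul] at this
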